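/- Let f be a finite measurable function on (X, 𝒳, μ, T). If limsup_n (1/n)|f∘T^{-n} + f∘T^n| < +∞ almost everywhere on a set of positive measure, then (1/n) f∘T^n converges to 0 μ-almost everywhere on X. -/

import Mathlib

open MeasureTheory Filter Topology

section MET

set_option linter.unusedSectionVars false
variable {X : Type*} [MeasurableSpace X] {μ : Measure X} [IsProbabilityMeasure μ]

/-- Birkhoff sum along forward iterates of `R`. -/
noncomputable def bS (R : X → X) (g : X → ℝ) (n : ℕ) (x : X) : ℝ :=
  ∑ k ∈ Finset.range n, g (R^[k] x)

lemma bS_zero (R : X → X) (g : X → ℝ) (x : X) : bS R g 0 x = 0 := by simp [bS]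

lemma bS_succ_left (R : X → X) (g : X → ℝ) (n : ℕ) (x : X) :
    bS R g (n + 1) x = g x + bS R g n (R x) := by
  unfold bS
  rw [Finset.sum_range_succ']
  simp only [Function.iterate_succ_apply, Function.iterate_zero_apply]
  ring

lemma bS_measurable {R : X → X} (hR : Measurable R) {g : X → ℝ} (hg : Measurable g) (n : ℕ) :
    Measurable (bS R g n) :=
  Finset.measurable_sum _ fun k _ => hg.comp (hR.iterate k)

lemma bS_abs_le {R : X → X} {g : X → ℝ} {C : ℝ} (hg : ∀ x, |g x| ≤ C) (n : ℕ) (x : X) :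
    |bS R g n x| ≤ n * C := by
  calc |bS R g n x| ≤ ∑ k ∈ Finset.range n, |g (R^[k] x)| := Finset.abs_sum_le_sum_abs _ _
  _ ≤ ∑ _k ∈ Finset.range n, C := Finset.sum_le_sum fun k _ => hg _
  _ = n * C := by simp [mul_comm]

/-- maximal function -/
noncomputable def bM (R : X → X) (g : X → ℝ) : ℕ → X → ℝ
  | 0 => fun _ => 0
  | (N + 1) => fun x => max (bM R g N x) (bS R g (N + 1) x)

lemma bM_nonneg (R : X → X) (g : X → ℝ) (N : ℕ) (x : X) : 0 ≤ bM R g N x := by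
  induction N with
  | zero => simp [bM]
  | succ N ih => exact le_trans ih (le_max_left _ _)

lemma bM_mono (R : X → X) (g : X → ℝ) {N N' : ℕ} (h : N ≤ N') (x : X) :
    bM R g N x ≤ bM R g N' x := by
  induction N' with
  | zero => simp_all
  | succ N' ih =>
    rcases Nat.lt_or_ge N (N' + 1) with h' | h'
    · exact le_trans (ih (Nat.lt_succ_iff.mp h')) (le_max_left _ _)
    · have : N = N' + 1 := le_antisymm h h'
      subst this; rfl

lemma bS_le_bM (R : X → X) (g : X → ℝ) {j N : ℕ} (hj : j ≤ N) (x : X) :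
    bS R g j x ≤ bM R g N x := by
  cases j with
  | zero => rw [bS_zero]; exact bM_nonneg R g N x
  | succ j' =>
    calc bS R g (j' + 1) x ≤ bM R g (j' + 1) x := le_max_right _ _
    _ ≤ bM R g N x := bM_mono R g hj x

lemma bM_pos_elim (R : X → X) (g : X → ℝ) (N : ℕ) (x : X) (h : 0 < bM R g N x) :
    ∃ n, 1 ≤ n ∧ n ≤ N ∧ bM R g N x = bS R g n x := by
  induction N with
  | zero => simp [bM] at h
  | succ N ih =>
    rcases max_cases (bM R g N x) (bS R g (N + 1) x) with ⟨heq, _⟩ | ⟨heq, _⟩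
    · have heq' : bM R g (N + 1) x = bM R g N x := heq
      have h' : 0 < bM R g N x := heq' ▸ h
      obtain ⟨n, h1, h2, h3⟩ := ih h'
      exact ⟨n, h1, h2.trans (Nat.le_succ N), heq'.trans h3⟩
    · exact ⟨N + 1, Nat.succ_le_succ (Nat.zero_le N), le_refl _, heq⟩

lemma bM_pos_iff (R : X → X) (g : X → ℝ) (N : ℕ) (x : X) :
    0 < bM R g N x ↔ ∃ n, 1 ≤ n ∧ n ≤ N ∧ 0 < bS R g n x := by
  constructor
  · intro h
    obtain ⟨n, h1, h2, h3⟩ := bM_pos_elim R g N x h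
    exact ⟨n, h1, h2, h3 ▸ h⟩
  · rintro ⟨n, h1, h2, h3⟩
    exact lt_of_lt_of_le h3 (bS_le_bM R g h2 x)

lemma bM_measurable {R : X → X} (hR : Measurable R) {g : X → ℝ} (hg : Measurable g) (N : ℕ) :
    Measurable (bM R g N) := by
  induction N with
  | zero => exact measurable_const
  | succ N ih =>
    show Measurable fun x => max (bM R g N x) (bS R g (N + 1) x)
    exact Measurable.max ih (bS_measurable hR hg (N + 1))

lemma bM_le {R : X → X} {g : X → ℝ} {C : ℝ} (hC : 0 ≤ C) (hg : ∀ x, |g x| ≤ C) (N : ℕ) (x : X) :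
    |bM R g N x| ≤ N * C := by
  rw [abs_of_nonneg (bM_nonneg R g N x)]
  induction N with
  | zero => simp [bM]
  | succ N ih =>
    apply max_le
    · exact ih.trans (by push_cast; nlinarith)
    · exact (abs_le.mp (bS_abs_le hg (N + 1) x)).2

lemma integrable_of_bounded {g : X → ℝ} (hg : Measurable g) {C : ℝ} (hC : ∀ x, |g x| ≤ C) :
    Integrable g μ :=
  (integrable_const C).mono' hg.aestronglyMeasurable
    (Eventually.of_forall fun x => by simpa [Real.norm_eq_abs] using hC x)

/-- **Maximal ergodic theorem** (Garsia's proof), for bounded functions. -/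
lemma maximal_ergodic {R : X → X} (hRmp : MeasurePreserving R μ μ)
    {g : X → ℝ} (hg : Measurable g) {C : ℝ} (hC : 0 ≤ C) (hgC : ∀ x, |g x| ≤ C) :
    0 ≤ ∫ x in {x | ∃ n, 1 ≤ n ∧ 0 < bS R g n x}, g x ∂μ := by
  have hR : Measurable R := hRmp.measurable
  have hgint : Integrable g μ := integrable_of_bounded hg hgC
  set E : ℕ → Set X := fun N => {x | 0 < bM R g N x} with hE
  have hEmeas : ∀ N, MeasurableSet (E N) :=
    fun N => measurableSet_lt measurable_const (bM_measurable hR hg N)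
  have hEmono : Monotone E := fun N N' h x hx => lt_of_lt_of_le hx (bM_mono R g h x)
  have hEU : {x | ∃ n, 1 ≤ n ∧ 0 < bS R g n x} = ⋃ N, E N := by
    ext x
    simp only [Set.mem_setOf_eq, Set.mem_iUnion, hE, bM_pos_iff]
    constructor
    · rintro ⟨n, h1, h2⟩; exact ⟨n, n, h1, le_refl n, h2⟩
    · rintro ⟨N, n, h1, _, h3⟩; exact ⟨n, h1, h3⟩
  -- step: each E N has nonneg integral
  have key : ∀ N, 0 ≤ ∫ x in E N, g x ∂μ := by
    intro N
    have hMint : Integrable (bM R g N) μ :=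
      integrable_of_bounded (bM_measurable hR hg N) (bM_le hC hgC N)
    have hMRmeas : Measurable fun x => bM R g N (R x) := (bM_measurable hR hg N).comp hR
    have hMRint : Integrable (fun x => bM R g N (R x)) μ :=
      integrable_of_bounded hMRmeas (fun x => bM_le hC hgC N (R x))
    have hpt : ∀ x ∈ E N, bM R g N x - bM R g N (R x) ≤ g x := by
      intro x hx
      obtain ⟨n, h1, _h2, h3⟩ := bM_pos_elim R g N x hx
      obtain ⟨n', rfl⟩ := Nat.exists_eq_add_of_le' h1
      rw [h3, bS_succ_left]
      have : bS R g n' (R x) ≤ bM R g N (R x) := bS_le_bM R g (by omega) (R x)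
      linarith
  -- integral identities
    have hI3 : ∫ x in E N, bM R g N x ∂μ = ∫ x, bM R g N x ∂μ := by
      rw [← integral_add_compl (hEmeas N) hMint]
      have : ∫ x in (E N)ᶜ, bM R g N x ∂μ = 0 := by
        apply setIntegral_eq_zero_of_forall_eq_zero
        intro x hx
        have : ¬ 0 < bM R g N x := hx
        linarith [bM_nonneg R g N x, not_lt.mp this]
      rw [this, add_zero]
    have hI4 : ∫ x in E N, bM R g N (R x) ∂μ ≤ ∫ x, bM R g N (R x) ∂μ :=
      setIntegral_le_integral hMRint (Eventually.of_forall fun x => bM_nonneg R g N (R x))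
    have hI5 : ∫ x, bM R g N (R x) ∂μ = ∫ x, bM R g N x ∂μ := by
      conv_rhs => rw [← hRmp.map_eq]
      rw [integral_map hR.aemeasurable (bM_measurable hR hg N).aestronglyMeasurable]
    have hI1 : ∫ x in E N, (bM R g N x - bM R g N (R x)) ∂μ ≤ ∫ x in E N, g x ∂μ := by
      apply setIntegral_mono_on (hMint.sub hMRint).integrableOn hgint.integrableOn (hEmeas N)
      exact hpt
    have hI2 : ∫ x in E N, (bM R g N x - bM R g N (R x)) ∂μ
        = ∫ x in E N, bM R g N x ∂μ - ∫ x in E N, bM R g N (R x) ∂μ :=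
      integral_sub hMint.integrableOn hMRint.integrableOn
    have : (0:ℝ) ≤ ∫ x in E N, bM R g N x ∂μ - ∫ x in E N, bM R g N (R x) ∂μ := by
      rw [hI3]
      linarith [hI4, hI5.le, hI5.ge]
    linarith [hI1, hI2 ▸ this]
  rw [hEU]
  have htend := tendsto_setIntegral_of_monotone hEmeas hEmono
    (hgint.integrableOn : IntegrableOn g (⋃ N, E N) μ)
  exact ge_of_tendsto' htend key

end MET
section Birkhoff

set_option linter.unusedSectionVars false
variable {X : Type*} [MeasurableSpace X] {μ : Measure X} [IsProbabilityMeasure μ]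

lemma ind_nonneg {B : Set X} (x : X) : 0 ≤ B.indicator (1 : X → ℝ) x :=
  Set.indicator_nonneg (fun _ _ => zero_le_one) x

lemma ind_le_one {B : Set X} (x : X) : B.indicator (1 : X → ℝ) x ≤ 1 := by
  by_cases h : x ∈ B <;> simp [Set.indicator_of_mem, Set.indicator_of_notMem, h]

lemma ind_abs_le {B : Set X} (x : X) : |B.indicator (1 : X → ℝ) x| ≤ 1 := by
  rw [abs_of_nonneg (ind_nonneg x)]; exact ind_le_one x

lemma ind_measurable {B : Set X} (hB : MeasurableSet B) :
    Measurable (B.indicator (1 : X → ℝ)) := measurable_one.indicator hB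

lemma birkhoff_upper {R : X → X} (hR : Ergodic R μ) {B : Set X} (hB : MeasurableSet B) :
    ∀ᵐ x ∂μ, ∀ q : ℚ, (μ B).toReal < (q : ℝ) →
      ∀ᶠ n in atTop, bS R (B.indicator 1) n x ≤ (q : ℝ) * n := by
  have hRmeas : Measurable R := hR.toMeasurePreserving.measurable
  set ind := B.indicator (1 : X → ℝ) with hind
  set I := (μ B).toReal with hI
  rw [ae_all_iff]
  intro q
  by_cases hq : I < (q : ℝ)
  swap
  · exact Eventually.of_forall fun x h => absurd h hq
  -- the invariant "bad" set
  set D : Set X := ⋂ (q' : ℚ) (_ : q' < q) (N : ℕ),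
      ⋃ (n : ℕ) (_ : N ≤ n), {x | (q' : ℝ) * n < bS R ind n x} with hD
  have hDmem : ∀ x, x ∈ D ↔ ∀ q' : ℚ, q' < q → ∀ N : ℕ, ∃ n, N ≤ n ∧
      (q' : ℝ) * n < bS R ind n x := by
    intro x
    simp only [hD, Set.mem_iInter, Set.mem_iUnion, Set.mem_setOf_eq, exists_prop]
  have hDmeas : MeasurableSet D := by
    refine MeasurableSet.iInter fun q' => MeasurableSet.iInter fun _ =>
      MeasurableSet.iInter fun N => MeasurableSet.iUnion fun n =>
      MeasurableSet.iUnion fun _ => ?_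
    exact measurableSet_lt measurable_const (bS_measurable hRmeas (ind_measurable hB) n)
  have hind_bd : ∀ y, |ind y| ≤ 1 := fun y => ind_abs_le y
  -- strict invariance
  have hDinv : R ⁻¹' D = D := by
    ext x
    simp only [Set.mem_preimage, hDmem]
    constructor
    · -- R x ∈ D → x ∈ D
      intro hx q' hq' N
      set q'' : ℚ := (q' + q) / 2 with hq''
      have h1 : q' < q'' := by rw [hq'']; linarith
      have h2 : q'' < q := by rw [hq'']; linarith
      have hpos : (0 : ℝ) < (q'' : ℝ) - q' := by push_cast; exact_mod_cast sub_pos.mpr h1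
      set n₂ : ℕ := ⌈max 0 ((q' : ℝ) / ((q'' : ℝ) - q'))⌉₊ with hn₂
      obtain ⟨n, hnN, hn⟩ := hx q'' h2 (max N n₂)
      have hNn : N ≤ n + 1 := by have := le_trans (le_max_left N n₂) hnN; omega
      refine ⟨n + 1, hNn, ?_⟩
      have hsucc : bS R ind (n + 1) x = ind x + bS R ind n (R x) := bS_succ_left R ind n x
      have hge : (q' : ℝ) * (n + 1) ≤ (q'' : ℝ) * n := by
        have hn2 : (n₂ : ℝ) ≤ n := by
          exact_mod_cast Nat.cast_le.mpr (le_trans (le_max_right N n₂) hnN)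
        have : (q' : ℝ) / ((q'' : ℝ) - q') ≤ n :=
          le_trans (le_trans (le_max_right 0 _) (Nat.le_ceil _)) hn2
        have := (div_le_iff₀ hpos).mp this
        push_cast
        nlinarith
      calc (q' : ℝ) * (n + 1 : ℕ) = (q' : ℝ) * ((n : ℝ) + 1) := by push_cast; ring
      _ ≤ (q'' : ℝ) * n := hge
      _ < bS R ind n (R x) := hn
      _ ≤ bS R ind (n + 1) x := by
          have := ind_nonneg (B := B) x
          rw [hsucc]; linarith
    · -- x ∈ D → R x ∈ D
      intro hx q' hq' N
      set q'' : ℚ := (q' + q) / 2 with hq''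
      have h1 : q' < q'' := by rw [hq'']; linarith
      have h2 : q'' < q := by rw [hq'']; linarith
      have hpos : (0 : ℝ) < (q'' : ℝ) - q' := by exact_mod_cast sub_pos.mpr h1
      set n₁ : ℕ := ⌈max 0 ((1 - (q' : ℝ)) / ((q'' : ℝ) - q'))⌉₊ with hn₁
      obtain ⟨m, hmN, hm⟩ := hx q'' h2 (max (N + 1) (n₁ + 1))
      have hm1 : 1 ≤ m :=
        le_trans (le_trans (Nat.succ_le_succ (Nat.zero_le N)) (le_max_left _ _)) hmN
      obtain ⟨n, rfl⟩ := Nat.exists_eq_add_of_le hm1  -- m = 1 + n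
      refine ⟨n, ?_, ?_⟩
      · have := le_trans (le_max_left (N + 1) (n₁ + 1)) hmN; omega
      · have hsucc : bS R ind (n + 1) x = ind x + bS R ind n (R x) := bS_succ_left R ind n x
        have hn1 : (n₁ : ℝ) + 1 ≤ (1 : ℝ) + n := by
          have : n₁ + 1 ≤ 1 + n := le_trans (le_max_right (N + 1) (n₁ + 1)) hmN
          exact_mod_cast this
        have hkey : (1 - (q' : ℝ)) / ((q'' : ℝ) - q') ≤ n₁ :=
          le_trans (le_max_right 0 _) (Nat.le_ceil _)
        have hkey2 : 1 - (q' : ℝ) ≤ ((q'' : ℝ) - q') * n₁ := by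
          have := (div_le_iff₀ hpos).mp hkey
          linarith
        have hmn : (1 + n : ℕ) = n + 1 := by omega
        rw [hmn] at hm
        have hindx : ind x ≤ 1 := ind_le_one x
        -- q'' * (n+1) < bS (n+1) x = ind x + bS n (R x)
        rw [hsucc] at hm
        have hn₁n : (n₁ : ℝ) ≤ n := by linarith
        have : ((q'' : ℝ) - q') * n₁ ≤ ((q'' : ℝ) - q') * n :=
          mul_le_mul_of_nonneg_left hn₁n (le_of_lt hpos)
        push_cast
        push_cast at hm
        nlinarith
  -- ergodicity
  rcases hR.toPreErgodic.ae_empty_or_univ hDmeas hDinv with hnull | hfull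
  · -- D is null: good case
    have hmuD : μ D = 0 := ae_eq_empty.mp hnull
    have hae : ∀ᵐ x ∂μ, x ∉ D := measure_eq_zero_iff_ae_notMem.mp hmuD
    filter_upwards [hae] with x hx
    intro _
    rw [hDmem] at hx
    push_neg at hx
    obtain ⟨q', hq'q, N, hN⟩ := hx
    rw [eventually_atTop]
    refine ⟨N, fun n hn => ?_⟩
    calc bS R ind n x ≤ (q' : ℝ) * n := hN n hn
    _ ≤ (q : ℝ) * n := by
        have hqq : (q' : ℝ) ≤ (q : ℝ) := by exact_mod_cast le_of_lt hq'q
        have hn0 : (0:ℝ) ≤ (n : ℝ) := Nat.cast_nonneg n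
        nlinarith
  · -- D is conull: contradiction with the maximal ergodic theorem
    exfalso
    obtain ⟨q₀, hIq₀, hq₀q⟩ := exists_rat_btwn hq
    set g' : X → ℝ := D.indicator (fun x => ind x - q₀) with hg'
    have hg'meas : Measurable g' := ((ind_measurable hB).sub measurable_const).indicator hDmeas
    have hg'bd : ∀ x, |g' x| ≤ 1 + |(q₀ : ℝ)| := by
      intro x
      by_cases h : x ∈ D
      · rw [hg', Set.indicator_of_mem h]
        have h0 := ind_nonneg (B := B) x
        have h1 := ind_le_one (B := B) x
        rw [abs_le]
        constructor <;> [skip; skip] <;>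
          · have := neg_abs_le ((q₀ : ℝ)); have := le_abs_self ((q₀ : ℝ)); linarith
      · rw [hg', Set.indicator_of_notMem h, abs_zero]
        positivity
    have hDiter : ∀ k x, (R^[k] x ∈ D ↔ x ∈ D) := by
      intro k
      induction k with
      | zero => intro x; rfl
      | succ k ih =>
        intro x
        rw [Function.iterate_succ_apply]
        rw [ih (R x)]
        constructor
        · intro h; rw [← hDinv]; exact h
        · intro h; rw [← hDinv] at h; exact h
    have hbSg' : ∀ n x, x ∈ D → bS R g' n x = bS R ind n x - (q₀ : ℝ) * n := by
      intro n x hx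
      unfold bS
      have : ∀ k ∈ Finset.range n, g' (R^[k] x) = ind (R^[k] x) - (q₀ : ℝ) := by
        intro k _
        rw [hg', Set.indicator_of_mem ((hDiter k x).mpr hx)]
      rw [Finset.sum_congr rfl this, Finset.sum_sub_distrib]
      simp [mul_comm]
    have hbSg'0 : ∀ n x, x ∉ D → bS R g' n x = 0 := by
      intro n x hx
      unfold bS
      apply Finset.sum_eq_zero
      intro k _
      rw [hg', Set.indicator_of_notMem (fun h => hx ((hDiter k x).mp h))]
    have hE'D : {x | ∃ n, 1 ≤ n ∧ 0 < bS R g' n x} = D := by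
      ext x
      simp only [Set.mem_setOf_eq]
      constructor
      · rintro ⟨n, _, hpos⟩
        by_contra hxD
        rw [hbSg'0 n x hxD] at hpos
        exact lt_irrefl 0 hpos
      · intro hxD
        obtain ⟨n, hn1, hn⟩ := (hDmem x).mp hxD q₀ (by exact_mod_cast hq₀q) 1
        exact ⟨n, hn1, by rw [hbSg' n x hxD]; linarith⟩
    have hMET := maximal_ergodic hR.toMeasurePreserving hg'meas
      (by positivity : (0:ℝ) ≤ 1 + |(q₀ : ℝ)|) hg'bd
    rw [hE'D] at hMET
    -- compute the integral: = ∫ g' (g' vanishes off D) = I - q₀ < 0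
    have hg'int : Integrable g' μ := integrable_of_bounded hg'meas hg'bd
    have hsplit : ∫ x in D, g' x ∂μ = ∫ x, g' x ∂μ := by
      rw [← integral_add_compl hDmeas hg'int]
      have : ∫ x in Dᶜ, g' x ∂μ = 0 :=
        setIntegral_eq_zero_of_forall_eq_zero fun x hx => Set.indicator_of_notMem hx _
      rw [this, add_zero]
    have hcongr : g' =ᵐ[μ] fun x => ind x - (q₀ : ℝ) := by
      filter_upwards [hfull] with x hx
      have hxD : x ∈ D := by show D x; rw [hx]; exact Set.mem_univ x
      rw [hg', Set.indicator_of_mem hxD]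
    have hval : ∫ x, g' x ∂μ = I - (q₀ : ℝ) := by
      rw [integral_congr_ae hcongr,
        integral_sub (integrable_of_bounded (ind_measurable hB) hind_bd) (integrable_const _),
        integral_const]
      simp only [probReal_univ, smul_eq_mul, one_mul]
      have : ∫ x, ind x ∂μ = I := by
        rw [hind, hI]
        exact (integral_indicator_const (1 : ℝ) hB (μ := μ)).trans
          (by rw [smul_eq_mul, mul_one]; rfl)
      rw [this]
    rw [hsplit, hval] at hMET
    linarith

end Birkhoff
section Visits

set_option linter.unusedSectionVars false
variable {X : Type*} [MeasurableSpace X] {μ : Measure X} [IsProbabilityMeasure μ]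

lemma bS_ind_le_n {R : X → X} {B : Set X} (n : ℕ) (x : X) :
    bS R (B.indicator 1) n x ≤ n := by
  calc bS R (B.indicator 1) n x ≤ ∑ _k ∈ Finset.range n, (1:ℝ) :=
    Finset.sum_le_sum fun k _ => ind_le_one _
  _ = n := by simp

lemma bS_compl {R : X → X} {B : Set X} (n : ℕ) (x : X) :
    bS R (Bᶜ.indicator 1) n x = n - bS R (B.indicator 1) n x := by
  unfold bS
  rw [eq_sub_iff_add_eq, ← Finset.sum_add_distrib]
  have : ∀ k ∈ Finset.range n,
      Bᶜ.indicator (1 : X → ℝ) (R^[k] x) + B.indicator 1 (R^[k] x) = 1 := by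
    intro k _
    by_cases h : R^[k] x ∈ B <;>
      simp [Set.indicator_of_mem, Set.indicator_of_notMem, h, Set.mem_compl_iff]
  rw [Finset.sum_congr rfl this]
  simp

/-- Pointwise ergodic theorem for indicator functions. -/
lemma birkhoff_indicator {R : X → X} (hR : Ergodic R μ) {B : Set X} (hB : MeasurableSet B) :
    ∀ᵐ x ∂μ, Tendsto (fun n : ℕ => bS R (B.indicator 1) n x / n) atTop
      (𝓝 (μ B).toReal) := by
  have hIc : (μ Bᶜ).toReal = 1 - (μ B).toReal := by
    rw [prob_compl_eq_one_sub hB]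
    rw [ENNReal.toReal_sub_of_le prob_le_one ENNReal.one_ne_top]
    simp
  filter_upwards [birkhoff_upper hR hB, birkhoff_upper hR hB.compl] with x hup hlow
  set I := (μ B).toReal with hI
  rw [Metric.tendsto_atTop]
  intro ε hε
  obtain ⟨q, hq1, hq2⟩ := exists_rat_btwn (show I < I + ε/2 by linarith)
  obtain ⟨p, hp1, hp2⟩ := exists_rat_btwn (show (μ Bᶜ).toReal < (μ Bᶜ).toReal + ε/2 by linarith)
  obtain ⟨N₁, hN₁⟩ := eventually_atTop.mp (hup q hq1)
  obtain ⟨N₂, hN₂⟩ := eventually_atTop.mp (hlow p hp1)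
  refine ⟨max (max N₁ N₂) 1, fun n hn => ?_⟩
  have hn1 : 1 ≤ n := le_trans (le_max_right _ _) hn
  have hnn : (0:ℝ) < n := by exact_mod_cast hn1
  have h1 : bS R (B.indicator 1) n x ≤ (q : ℝ) * n :=
    hN₁ n (le_trans (le_trans (le_max_left _ _) (le_max_left _ _)) hn)
  have h2 : bS R (Bᶜ.indicator 1) n x ≤ (p : ℝ) * n :=
    hN₂ n (le_trans (le_trans (le_max_right _ _) (le_max_left _ _)) hn)
  rw [bS_compl] at h2
  rw [Real.dist_eq, abs_lt]
  rw [hIc] at hp2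
  have hbs_up : bS R (B.indicator 1) n x / n ≤ (q:ℝ) := by
    rw [div_le_iff₀ hnn]; linarith
  have hbs_low : (1 - (p:ℝ)) ≤ bS R (B.indicator 1) n x / n := by
    rw [le_div_iff₀ hnn]; nlinarith
  constructor
  · linarith
  · linarith

/-- A.e., the forward orbit visits a positive measure set in every linear window. -/
lemma visit_windows {R : X → X} (hR : Ergodic R μ) {B : Set X} (hB : MeasurableSet B)
    (hBpos : 0 < μ B) :
    ∀ᵐ x ∂μ, ∀ a b : ℚ, 0 ≤ a → a < b →
      ∀ᶠ m : ℕ in atTop, ∃ k : ℕ, (a : ℝ) * m ≤ (k : ℝ) ∧ (k : ℝ) ≤ (b : ℝ) * m ∧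
        R^[k] x ∈ B := by
  filter_upwards [birkhoff_indicator hR hB] with x htend
  intro a b ha hab
  set I := (μ B).toReal with hI
  have hIpos : 0 < I := ENNReal.toReal_pos hBpos.ne' (measure_ne_top μ B)
  have hab' : (a:ℝ) < (b:ℝ) := by exact_mod_cast hab
  have ha' : (0:ℝ) ≤ (a:ℝ) := by exact_mod_cast ha
  have hb' : (0:ℝ) < (b:ℝ) := lt_of_le_of_lt ha' hab'
  set δ : ℝ := ((b:ℝ) - a) / ((a:ℝ) + b + 2) with hδ
  have hδpos : 0 < δ := by apply div_pos <;> linarith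
  have hδlt : δ < 1 := by
    rw [hδ, div_lt_one (by linarith)]; linarith
  set ε : ℝ := I * δ with hε
  have hεpos : 0 < ε := mul_pos hIpos hδpos
  have hεI : ε < I := by nlinarith
  have hγ : 0 < (I - ε) * b - (I + ε) * a := by
    have hd : (0:ℝ) < (a:ℝ) + b + 2 := by linarith
    have hε' : ε * ((a:ℝ) + b + 2) = I * ((b:ℝ) - a) := by
      rw [hε, hδ]; field_simp
    nlinarith [hεpos]
  set γ : ℝ := (I - ε) * b - (I + ε) * a with hγdef
  obtain ⟨N₀, hN₀⟩ := (Metric.tendsto_atTop.mp htend) ε hεpos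
  set N₁ : ℕ := max N₀ 1 with hN₁
  -- bounds from Birkhoff
  have hbd : ∀ n : ℕ, N₁ ≤ n → (I - ε) * n ≤ bS R (B.indicator 1) n x ∧
      bS R (B.indicator 1) n x ≤ (I + ε) * n := by
    intro n hn
    have h := hN₀ n (le_trans (le_max_left _ _) hn)
    rw [Real.dist_eq, abs_lt] at h
    have hn0 : (0:ℝ) < n := by
      have : 1 ≤ n := le_trans (le_max_right _ _) hn
      exact_mod_cast this
    constructor
    · have h2 : I - ε < bS R (B.indicator 1) n x / n := by linarith [h.1]
      have := (lt_div_iff₀ hn0).mp h2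
      linarith
    · have h1 : bS R (B.indicator 1) n x / n < I + ε := by linarith [h.2]
      have := (div_lt_iff₀ hn0).mp h1
      linarith
  -- eventual largeness conditions
  have E1 : ∀ᶠ m : ℕ in atTop, (1:ℝ) ≤ ((b:ℝ) - a) * m :=
    (tendsto_natCast_atTop_atTop.const_mul_atTop (by linarith : (0:ℝ) < (b:ℝ) - a)).eventually_ge_atTop 1
  have E2 : ∀ᶠ m : ℕ in atTop, ((N₁ : ℝ)) ≤ (b:ℝ) * m :=
    (tendsto_natCast_atTop_atTop.const_mul_atTop hb').eventually_ge_atTop _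
  have E3 : ∀ᶠ m : ℕ in atTop, ((N₁ : ℝ)) ≤ ((I - ε) * b) * m :=
    (tendsto_natCast_atTop_atTop.const_mul_atTop (mul_pos (by linarith) hb')).eventually_ge_atTop _
  have E4 : ∀ᶠ m : ℕ in atTop, (I + ε) + 1 ≤ γ * m :=
    (tendsto_natCast_atTop_atTop.const_mul_atTop hγ).eventually_ge_atTop _
  filter_upwards [E1, E2, E3, E4] with m e1 e2 e3 e4
  by_contra hcon
  push_neg at hcon
  -- no visit in the window [a*m, b*m]
  set k₀ : ℕ := ⌈(a:ℝ) * m⌉₊ with hk₀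
  set k₁ : ℕ := ⌊(b:ℝ) * m⌋₊ with hk₁
  have hm0 : (0:ℝ) ≤ (m:ℝ) := Nat.cast_nonneg m
  have hk₀ge : (a:ℝ) * m ≤ k₀ := Nat.le_ceil _
  have hk₀le : (k₀:ℝ) ≤ (a:ℝ) * m + 1 := le_of_lt (Nat.ceil_lt_add_one (by positivity))
  have hk₁le : (k₁:ℝ) ≤ (b:ℝ) * m := Nat.floor_le (by positivity)
  have hk₁gt : (b:ℝ) * m < (k₁:ℝ) + 1 := Nat.lt_floor_add_one _
  have hk₀k₁ : k₀ ≤ k₁ + 1 := by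
    have : (k₀:ℝ) ≤ (k₁:ℝ) + 1 := by linarith
    exact_mod_cast this
  -- the sum does not increase on the window
  have hsum : bS R (B.indicator 1) (k₁ + 1) x = bS R (B.indicator 1) k₀ x := by
    unfold bS
    rw [← Finset.sum_range_add_sum_Ico _ hk₀k₁]
    have : ∀ k ∈ Finset.Ico k₀ (k₁ + 1), B.indicator (1 : X → ℝ) (R^[k] x) = 0 := by
      intro k hk
      rw [Finset.mem_Ico] at hk
      apply Set.indicator_of_notMem
      apply hcon k
      · exact le_trans hk₀ge (by exact_mod_cast hk.1)
      · have : (k:ℝ) ≤ k₁ := by exact_mod_cast Nat.lt_succ_iff.mp hk.2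
        linarith
    rw [Finset.sum_congr rfl this]
    simp
  -- lower bound at k₁ + 1
  have hN₁k₁ : N₁ ≤ k₁ + 1 := by
    have h5 : (N₁:ℝ) < ((k₁ + 1 : ℕ):ℝ) := by push_cast; linarith [lt_of_le_of_lt e2 hk₁gt]
    exact le_of_lt (by exact_mod_cast h5)
  have hlow : (I - ε) * ((k₁:ℝ) + 1) ≤ bS R (B.indicator 1) (k₁ + 1) x := by
    have := (hbd (k₁ + 1) hN₁k₁).1
    push_cast at this ⊢
    exact this
  -- upper bound at k₀, in both cases
  rcases Nat.lt_or_ge k₀ N₁ with hcase | hcase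
  · -- small k₀ : trivial bound
    have hup : bS R (B.indicator 1) k₀ x ≤ (k₀:ℝ) := bS_ind_le_n k₀ x
    have hk₀N : (k₀:ℝ) < N₁ := by exact_mod_cast hcase
    have hmain : (I - ε) * ((k₁:ℝ) + 1) > (k₀:ℝ) := by
      calc (k₀:ℝ) < N₁ := hk₀N
      _ ≤ (I - ε) * b * m := e3
      _ < (I - ε) * ((k₁:ℝ) + 1) := by
          have : (I - ε) * ((b:ℝ) * m) < (I - ε) * ((k₁:ℝ) + 1) :=
            mul_lt_mul_of_pos_left hk₁gt (by linarith)
          linarith [this]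
    rw [hsum] at hlow
    linarith
  · -- large k₀ : Birkhoff upper bound
    have hup := (hbd k₀ hcase).2
    have hmain : (I + ε) * (k₀:ℝ) < (I - ε) * ((k₁:ℝ) + 1) := by
      have h1 : (I + ε) * (k₀:ℝ) ≤ (I + ε) * ((a:ℝ) * m + 1) :=
        mul_le_mul_of_nonneg_left hk₀le (by linarith)
      have h2 : (I + ε) * ((a:ℝ) * m + 1) = (I + ε) * a * m + (I + ε) := by ring
      have h3 : (I + ε) * a * m + (I + ε) + 1 ≤ (I - ε) * b * m := by
        have : γ * m = (I - ε) * b * m - (I + ε) * a * m := by rw [hγdef]; ring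
        linarith [e4, this.symm.le, this.le]
      have h4 : (I - ε) * ((b:ℝ) * m) < (I - ε) * ((k₁:ℝ) + 1) :=
        mul_lt_mul_of_pos_left hk₁gt (by linarith)
      nlinarith
    rw [hsum] at hlow
    linarith
end Visits
section Main

set_option linter.unusedSectionVars false
set_option maxHeartbeats 1000000
variable {X : Type*} [MeasurableSpace X] {μ : Measure X} [IsProbabilityMeasure μ]

lemma coe_zpow_natCast (T : Equiv.Perm X) (k : ℕ) : ⇑(T ^ (k : ℤ)) = (⇑T)^[k] := by
  rw [zpow_natCast, Equiv.Perm.coe_pow]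

lemma coe_zpow_neg_natCast (T : Equiv.Perm X) (k : ℕ) :
    ⇑(T ^ (-(k : ℤ))) = (⇑T.symm)^[k] := by
  rw [zpow_neg, zpow_natCast, ← inv_pow, Equiv.Perm.coe_pow, Equiv.Perm.inv_def]

lemma zpow_apply_add (T : Equiv.Perm X) (i j : ℤ) (x : X) :
    (T ^ (i + j)) x = (T ^ i) ((T ^ j) x) := by
  rw [zpow_add, Equiv.Perm.mul_apply]

lemma measurable_zpow (T : Equiv.Perm X) (hTm : Measurable ⇑T)
    (hTm' : Measurable ⇑T.symm) (j : ℤ) : Measurable ⇑(T ^ j) := by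
  cases j with
  | ofNat k =>
    have : ((Int.ofNat k : ℤ)) = (k : ℤ) := rfl
    rw [this, coe_zpow_natCast]
    exact hTm.iterate k
  | negSucc k =>
    have : (Int.negSucc k) = -((k + 1 : ℕ) : ℤ) := rfl
    rw [this, coe_zpow_neg_natCast]
    exact hTm'.iterate (k + 1)

lemma ergodic_symm (T : Equiv.Perm X) (hTm : Measurable ⇑T)
    (hTm' : Measurable ⇑T.symm) (hT : Ergodic ⇑T μ) : Ergodic ⇑T.symm μ := by
  constructor
  · exact MeasurePreserving.symm
      (⟨T, hTm, hTm'⟩ : X ≃ᵐ X) hT.toMeasurePreserving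
  · constructor
    intro s hs hinv
    apply hT.toPreErgodic.aeconst_set hs
    conv_lhs => rw [← hinv]
    ext x
    simp

/-- Key a.e. bound: `|f(T^{±k} x)| ≤ M k + C(x)`. -/
lemma key_bound (T : Equiv.Perm X) (hTm : Measurable ⇑T) (hTm' : Measurable ⇑T.symm)
    (hT : Ergodic ⇑T μ) (f : X → ℝ) (M N : ℕ) {B : Set X} (hB : MeasurableSet B)
    (hBpos : 0 < μ B)
    (hBprop : ∀ y ∈ B, ∀ n : ℕ, N ≤ n →
      |f ((T ^ (-(n : ℤ))) y) + f ((T ^ (n : ℤ)) y)| ≤ (M : ℝ) * n) :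
    ∀ᵐ x ∂μ, ∃ C : ℝ, ∀ k : ℕ,
      |f ((T ^ (k : ℤ)) x)| ≤ (M : ℝ) * k + C ∧
      |f ((T ^ (-(k : ℤ))) x)| ≤ (M : ℝ) * k + C := by
  filter_upwards [visit_windows hT hB hBpos,
    visit_windows (ergodic_symm T hTm hTm' hT) hB hBpos] with x hfwd hbwd
  have h38 : (0 : ℚ) ≤ 3/8 := by norm_num
  have hlt : (3/8 : ℚ) < 1/2 := by norm_num
  obtain ⟨m₁, hm₁⟩ := eventually_atTop.mp (hfwd (3/8) (1/2) h38 hlt)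
  obtain ⟨m₂, hm₂⟩ := eventually_atTop.mp (hbwd (3/8) (1/2) h38 hlt)
  set m₀ : ℕ := max (max m₁ m₂) (2 * N) with hm₀
  set C : ℝ := ∑ j ∈ Finset.Icc (-(m₀ : ℤ)) (m₀ : ℤ), |f ((T ^ j) x)| with hC
  have hCmem : ∀ j : ℤ, -(m₀ : ℤ) ≤ j → j ≤ (m₀ : ℤ) → |f ((T ^ j) x)| ≤ C := by
    intro j h1 h2
    exact Finset.single_le_sum (f := fun j => |f ((T ^ j) x)|)
      (fun i _ => abs_nonneg _) (Finset.mem_Icc.mpr ⟨h1, h2⟩)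
  refine ⟨C, ?_⟩
  intro k
  induction k using Nat.strong_induction_on with
  | _ k ih =>
    rcases le_or_gt k m₀ with hk | hk
    · -- base case
      have h1 : |f ((T ^ (k : ℤ)) x)| ≤ C :=
        hCmem k (by omega) (by exact_mod_cast hk)
      have h2 : |f ((T ^ (-(k : ℤ))) x)| ≤ C := by
        apply hCmem (-(k:ℤ)) (by exact_mod_cast Int.neg_le_neg (by exact_mod_cast hk)) (by omega)
      have hMk : (0:ℝ) ≤ (M:ℝ) * k := by positivity
      exact ⟨by linarith, by linarith⟩
    · -- inductive step
      have hk1 : m₁ ≤ k := le_trans (le_trans (le_max_left _ _) (le_max_left _ _)) hk.le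
      have hk2 : m₂ ≤ k := le_trans (le_trans (le_max_right _ _) (le_max_left _ _)) hk.le
      have hk2N : 2 * N ≤ k := le_trans (le_max_right _ _) hk.le
      constructor
      · -- forward bound
        obtain ⟨v, hv1, hv2, hvB⟩ := hm₁ k hk1
        have hv2' : 2 * v ≤ k := by
          have : ((2 * v : ℕ) : ℝ) ≤ (k : ℝ) := by push_cast; push_cast at hv2; linarith
          exact_mod_cast this
        have hv3 : 3 * k ≤ 8 * v := by
          have : ((3 * k : ℕ) : ℝ) ≤ ((8 * v : ℕ) : ℝ) := by
            push_cast; push_cast at hv1; linarith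
          exact_mod_cast this
        set n : ℕ := k - v with hn
        set j' : ℕ := k - 2 * v with hj'
        have hnN : N ≤ n := by omega
        have hj'k : j' < k := by omega
        have hy : (⇑T)^[v] x = (T ^ (v : ℤ)) x := by rw [coe_zpow_natCast]
        rw [hy] at hvB
        have hprop := hBprop _ hvB n hnN
        have hnk : (n : ℤ) + (v : ℤ) = (k : ℤ) := by omega
        have hnj : -(n : ℤ) + (v : ℤ) = -(j' : ℤ) := by omega
        have he1 : (T ^ (n : ℤ)) ((T ^ (v : ℤ)) x) = (T ^ (k : ℤ)) x := by
          rw [← zpow_apply_add, hnk]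
        have he2 : (T ^ (-(n : ℤ))) ((T ^ (v : ℤ)) x) = (T ^ (-(j' : ℤ))) x := by
          rw [← zpow_apply_add, hnj]
        rw [he1, he2] at hprop
        have hih := (ih j' hj'k).2
        have hsum : (n : ℝ) + (j' : ℝ) ≤ (k : ℝ) := by
          have : n + j' ≤ k := by omega
          exact_mod_cast this
        have hM0 : (0:ℝ) ≤ (M:ℝ) := Nat.cast_nonneg M
        have habs : |f ((T ^ (k : ℤ)) x)| ≤ (M:ℝ) * n + |f ((T ^ (-(j' : ℤ))) x)| := by
          have htri := abs_add_le (f ((T ^ (-(j' : ℤ))) x) + f ((T ^ (k : ℤ)) x))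
            (-(f ((T ^ (-(j' : ℤ))) x)))
          have hsimp : f ((T ^ (-(j' : ℤ))) x) + f ((T ^ (k : ℤ)) x) +
              -(f ((T ^ (-(j' : ℤ))) x)) = f ((T ^ (k : ℤ)) x) := by ring
          rw [hsimp, abs_neg] at htri
          linarith
        have : (M:ℝ) * n + ((M:ℝ) * j' + C) ≤ (M:ℝ) * k + C := by nlinarith
        linarith
      · -- backward bound
        obtain ⟨v, hv1, hv2, hvB⟩ := hm₂ k hk2
        have hv2' : 2 * v ≤ k := by
          have : ((2 * v : ℕ) : ℝ) ≤ (k : ℝ) := by push_cast; push_cast at hv2; linarith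
          exact_mod_cast this
        have hv3 : 3 * k ≤ 8 * v := by
          have : ((3 * k : ℕ) : ℝ) ≤ ((8 * v : ℕ) : ℝ) := by
            push_cast; push_cast at hv1; linarith
          exact_mod_cast this
        set n : ℕ := k - v with hn
        set j' : ℕ := k - 2 * v with hj'
        have hnN : N ≤ n := by omega
        have hj'k : j' < k := by omega
        have hy : (⇑T.symm)^[v] x = (T ^ (-(v : ℤ))) x := by rw [coe_zpow_neg_natCast]
        rw [hy] at hvB
        have hprop := hBprop _ hvB n hnN
        have hnk : -(n : ℤ) + -(v : ℤ) = -(k : ℤ) := by omega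
        have hnj : (n : ℤ) + -(v : ℤ) = (j' : ℤ) := by omega
        have he1 : (T ^ (-(n : ℤ))) ((T ^ (-(v : ℤ))) x) = (T ^ (-(k : ℤ))) x := by
          rw [← zpow_apply_add, hnk]
        have he2 : (T ^ (n : ℤ)) ((T ^ (-(v : ℤ))) x) = (T ^ (j' : ℤ)) x := by
          rw [← zpow_apply_add, hnj]
        rw [he1, he2] at hprop
        have hih := (ih j' hj'k).1
        have hsum : (n : ℝ) + (j' : ℝ) ≤ (k : ℝ) := by
          have : n + j' ≤ k := by omega
          exact_mod_cast this
        have hM0 : (0:ℝ) ≤ (M:ℝ) := Nat.cast_nonneg M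
        have habs : |f ((T ^ (-(k : ℤ))) x)| ≤ (M:ℝ) * n + |f ((T ^ (j' : ℤ)) x)| := by
          have htri := abs_add_le (f ((T ^ (-(k : ℤ))) x) + f ((T ^ (j' : ℤ)) x))
            (-(f ((T ^ (j' : ℤ)) x)))
          have hsimp : f ((T ^ (-(k : ℤ))) x) + f ((T ^ (j' : ℤ)) x) +
              -(f ((T ^ (j' : ℤ)) x)) = f ((T ^ (-(k : ℤ))) x) := by ring
          rw [hsimp, abs_neg] at htri
          linarith
        have : (M:ℝ) * n + ((M:ℝ) * j' + C) ≤ (M:ℝ) * k + C := by nlinarith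
        linarith

end Main
/-- **Proposition 3.** Let `f` be a finite measurable function on an ergodic
invertible probability-preserving system `(X, μ, T)`. If
`limsup (1/n) |f ∘ T^{-n} + f ∘ T^n| < +∞` almost everywhere on a set of positive
measure, then `(1/n) f ∘ T^n → 0` almost everywhere on `X`. -/
theorem proposition3_residual_sum
    {X : Type*} [MeasurableSpace X] (μ : Measure X) [IsProbabilityMeasure μ]
    (T : Equiv.Perm X) (hTmeas : Measurable (⇑T)) (hTmeas' : Measurable (⇑T.symm))
    (hT : Ergodic (⇑T) μ)
    (f : X → ℝ) (hf : Measurable f)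
    (hpos : 0 < μ {x | limsup (fun n : ℕ =>
      ((|f ((T⁻¹ ^ n) x) + f ((T ^ n) x)| / (n : ℝ) : ℝ) : EReal)) atTop < ⊤}) :
    ∀ᵐ x ∂μ, Tendsto (fun n : ℕ => f ((T ^ n) x) / (n : ℝ)) atTop (𝓝 0) := by
  classical
  have hTn : ∀ (n : ℕ) (x : X), (T ^ n) x = (T ^ (n : ℤ)) x := by
    intro n x; rw [zpow_natCast]
  have hTin : ∀ (n : ℕ) (x : X), (T⁻¹ ^ n) x = (T ^ (-(n : ℤ))) x := by
    intro n x; rw [zpow_neg, zpow_natCast, inv_pow]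
  -- Step 1: a positive measure set with a uniform linear bound on the residual sums
  set Bs : ℕ → ℕ → Set X := fun M N =>
    {x | ∀ n : ℕ, N ≤ n → |f ((T ^ (-(n : ℤ))) x) + f ((T ^ (n : ℤ)) x)| ≤ (M : ℝ) * n}
    with hBs
  have hBmeas : ∀ M N, MeasurableSet (Bs M N) := by
    intro M N
    have : Bs M N = ⋂ (n : ℕ) (_ : N ≤ n),
        {x | |f ((T ^ (-(n : ℤ))) x) + f ((T ^ (n : ℤ)) x)| ≤ (M : ℝ) * n} := by
      ext x; simp [hBs]
    rw [this]
    refine MeasurableSet.iInter fun n => MeasurableSet.iInter fun _ => ?_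
    exact measurableSet_le (((hf.comp (measurable_zpow T hTmeas hTmeas' _)).add
      (hf.comp (measurable_zpow T hTmeas hTmeas' _))).abs) measurable_const
  have hsub : {x | limsup (fun n : ℕ =>
      ((|f ((T⁻¹ ^ n) x) + f ((T ^ n) x)| / (n : ℝ) : ℝ) : EReal)) atTop < ⊤}
      ⊆ ⋃ (M : ℕ) (N : ℕ), Bs M N := by
    intro x hx
    simp only [Set.mem_setOf_eq] at hx
    obtain ⟨r, hr1, hr2⟩ := exists_between hx
    have hrbot : r ≠ ⊥ := (bot_le.trans_lt hr1).ne'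
    have hev := eventually_lt_of_limsup_lt hr1
    set c : ℝ := r.toReal with hc
    have hrc : r = (c : EReal) := (EReal.coe_toReal hr2.ne hrbot).symm
    obtain ⟨N₀, hN₀⟩ := eventually_atTop.mp hev
    refine Set.mem_iUnion.mpr ⟨⌈c⌉₊, Set.mem_iUnion.mpr ⟨max N₀ 1, ?_⟩⟩
    intro n hn
    have h1 := hN₀ n (le_trans (le_max_left _ _) hn)
    rw [hrc] at h1
    have h1' : |f ((T⁻¹ ^ n) x) + f ((T ^ n) x)| / (n : ℝ) < c := by exact_mod_cast h1
    have hn1 : (1 : ℝ) ≤ n := by exact_mod_cast le_trans (le_max_right _ _) hn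
    have hcM : c ≤ (⌈c⌉₊ : ℝ) := Nat.le_ceil c
    rw [div_lt_iff₀ (by linarith)] at h1'
    rw [← hTin n x, ← hTn n x]
    have hMc : c * n ≤ (⌈c⌉₊ : ℝ) * n := mul_le_mul_of_nonneg_right hcM (by linarith)
    linarith
  have hMN : ∃ M N : ℕ, 0 < μ (Bs M N) := by
    by_contra h
    push_neg at h
    have hz : μ (⋃ (M : ℕ) (N : ℕ), Bs M N) = 0 :=
      measure_iUnion_null fun M => measure_iUnion_null fun N =>
        le_antisymm (h M N) (by simp)
    have := lt_of_lt_of_le hpos (measure_mono hsub)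
    rw [hz] at this
    exact lt_irrefl 0 this
  obtain ⟨M, N, hBpos⟩ := hMN
  -- Step 2: a.e. linear bound on both half-orbits
  have hA := key_bound T hTmeas hTmeas' hT f M N (hBmeas M N) hBpos
    (fun y hy n hn => hy n hn)
  -- Step 3: invariant sets W q
  set W : ℚ → Set X := fun q => {x | ∀ q' : ℚ, q < q' →
    ∃ N' : ℕ, ∀ m : ℕ, N' ≤ m → |f ((⇑T)^[m] x)| ≤ (q' : ℝ) * m} with hWdef
  have hWmeas : ∀ q, MeasurableSet (W q) := by
    intro q
    have : W q = ⋂ (q' : ℚ) (_ : q < q'), ⋃ (N' : ℕ), ⋂ (m : ℕ) (_ : N' ≤ m),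
        {x | |f ((⇑T)^[m] x)| ≤ (q' : ℝ) * m} := by
      ext x; simp [hWdef]
    rw [this]
    refine MeasurableSet.iInter fun q' => MeasurableSet.iInter fun _ =>
      MeasurableSet.iUnion fun N' => MeasurableSet.iInter fun m =>
      MeasurableSet.iInter fun _ => ?_
    exact measurableSet_le ((hf.comp (hTmeas.iterate m)).abs) measurable_const
  have hWinv : ∀ q : ℚ, 0 ≤ q → ⇑T ⁻¹' (W q) = W q := by
    intro q hq
    ext x
    simp only [Set.mem_preimage, hWdef, Set.mem_setOf_eq]
    constructor
    · intro h q' hq'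
      set q'' : ℚ := (q + q') / 2 with hq''
      have h1 : q < q'' := by rw [hq'']; linarith
      have h2 : q'' < q' := by rw [hq'']; linarith
      have h0 : (0:ℚ) < q'' := lt_of_le_of_lt hq h1
      obtain ⟨N', hN'⟩ := h q'' h1
      refine ⟨N' + 1, fun m hm => ?_⟩
      obtain ⟨m', rfl⟩ := Nat.exists_eq_add_of_le' (show 1 ≤ m by omega)
      have hm' : N' ≤ m' := by omega
      rw [Function.iterate_succ_apply]
      have hb := hN' m' hm'
      have hq''q' : (q'' : ℝ) ≤ (q' : ℝ) := by exact_mod_cast h2.le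
      have hq''0 : (0 : ℝ) < (q'' : ℝ) := by exact_mod_cast h0
      have hm0 : (0:ℝ) ≤ (m' : ℝ) := Nat.cast_nonneg m'
      have hcast : ((m' + 1 : ℕ) : ℝ) = (m' : ℝ) + 1 := by push_cast; ring
      rw [hcast]
      nlinarith
    · intro h q' hq'
      set q'' : ℚ := (q + q') / 2 with hq''
      have h1 : q < q'' := by rw [hq'']; linarith
      have h2 : q'' < q' := by rw [hq'']; linarith
      have h0 : (0:ℚ) < q'' := lt_of_le_of_lt hq h1
      obtain ⟨N', hN'⟩ := h q'' h1
      have hd : (0:ℝ) < (q' : ℝ) - (q'' : ℝ) := by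
        have : (q'' : ℝ) < (q' : ℝ) := by exact_mod_cast h2
        linarith
      refine ⟨max N' ⌈(q'' : ℝ) / ((q' : ℝ) - q'')⌉₊, fun m hm => ?_⟩
      have hb := hN' (m + 1) (by
        have := le_trans (le_max_left _ _) hm; omega)
      rw [← Function.iterate_succ_apply]
      have hmge : (q'' : ℝ) / ((q' : ℝ) - q'') ≤ (m : ℝ) := by
        refine le_trans (Nat.le_ceil _) ?_
        exact_mod_cast le_trans (le_max_right _ _) hm
      have hq''m : (q'' : ℝ) ≤ ((m : ℝ)) * ((q' : ℝ) - q'') := (div_le_iff₀ hd).mp hmge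
      have hcast : ((m + 1 : ℕ) : ℝ) = (m : ℝ) + 1 := by push_cast; ring
      rw [hcast] at hb
      nlinarith
  have hW01 : ∀ q : ℚ, 0 ≤ q → μ (W q) = 0 ∨ μ (W q) = 1 := by
    intro q hq
    rcases hT.toPreErgodic.ae_empty_or_univ (hWmeas q) (hWinv q hq) with h | h
    · left; exact ae_eq_empty.mp h
    · right; rw [measure_congr h, measure_univ]
  have hae_one : ∀ q : ℚ, (∀ᵐ x ∂μ, x ∈ W q) → μ (W q) = 1 := by
    intro q h
    have hc : μ (W q)ᶜ = 0 := by
      rw [measure_eq_zero_iff_ae_notMem]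
      filter_upwards [h] with x hx
      simp only [Set.mem_compl_iff, not_not]
      exact hx
    exact (prob_compl_eq_zero_iff (hWmeas q)).mp hc
  have hone_ae : ∀ q : ℚ, μ (W q) = 1 → (∀ᵐ x ∂μ, x ∈ W q) := by
    intro q h
    have hc : μ (W q)ᶜ = 0 := (prob_compl_eq_zero_iff (hWmeas q)).mpr h
    filter_upwards [measure_eq_zero_iff_ae_notMem.mp hc] with x hx
    simpa using hx
  -- Step 4: μ (W M) = 1
  have hM1 : μ (W (M : ℚ)) = 1 := by
    apply hae_one
    filter_upwards [hA] with x hx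
    obtain ⟨C, hC⟩ := hx
    intro q' hq'
    have hd : (0 : ℝ) < (q' : ℝ) - (M : ℝ) := by
      have : ((M : ℚ) : ℝ) < (q' : ℝ) := by exact_mod_cast hq'
      push_cast at this
      linarith
    refine ⟨⌈C / ((q' : ℝ) - M)⌉₊, fun m hm => ?_⟩
    have hit : (⇑T)^[m] x = (T ^ (m : ℤ)) x := (congrFun (coe_zpow_natCast T m) x).symm
    rw [hit]
    have hmC : C / ((q' : ℝ) - M) ≤ (m : ℝ) :=
      le_trans (Nat.le_ceil _) (by exact_mod_cast hm)
    have h2 : C ≤ (m : ℝ) * ((q' : ℝ) - M) := (div_le_iff₀ hd).mp hmC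
    have h1 := (hC m).1
    nlinarith
  -- Step 5: descent
  have hdesc : ∀ q q' : ℚ, 0 ≤ q → μ (W q) = 1 → q < q' → μ (W (q' / 2)) = 1 := by
    intro q q' hq0 hWq hqq'
    have hq'0 : (0:ℚ) < q' := lt_of_le_of_lt hq0 hqq'
    set A : ℕ → Set X := fun N' =>
      {x | ∀ m : ℕ, N' ≤ m → |f ((⇑T)^[m] x)| ≤ (q' : ℝ) * m} with hAdef
    have hAmeas : ∀ N', MeasurableSet (A N') := by
      intro N'
      have : A N' = ⋂ (m : ℕ) (_ : N' ≤ m), {x | |f ((⇑T)^[m] x)| ≤ (q' : ℝ) * m} := by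
        ext y; simp [hAdef]
      rw [this]
      exact MeasurableSet.iInter fun m => MeasurableSet.iInter fun _ =>
        measurableSet_le ((hf.comp (hTmeas.iterate m)).abs) measurable_const
    have hsubA : W q ⊆ ⋃ N', A N' := by
      intro x hx
      obtain ⟨N', hN'⟩ := hx q' hqq'
      exact Set.mem_iUnion.mpr ⟨N', hN'⟩
    have hexN : ∃ N₀, 0 < μ (A N₀) := by
      by_contra h
      push_neg at h
      have h0 : μ (⋃ N', A N') = 0 :=
        measure_iUnion_null fun N' => le_antisymm (h N') (by simp)
      have h1 : μ (W q) = 0 := measure_mono_null hsubA h0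
      rw [hWq] at h1
      exact one_ne_zero h1
    obtain ⟨N₀, hN₀⟩ := hexN
    apply hae_one
    filter_upwards [visit_windows hT (hAmeas N₀) hN₀] with x hx
    intro q'' hq''
    obtain ⟨m₃, hm₃⟩ := eventually_atTop.mp (hx (1/2) (3/4) (by norm_num) (by norm_num))
    refine ⟨max m₃ (4 * N₀ + 4), fun m hm => ?_⟩
    obtain ⟨k, hk1, hk2, hkA⟩ := hm₃ m (le_trans (le_max_left _ _) hm)
    have hm4 : 4 * N₀ + 4 ≤ m := le_trans (le_max_right _ _) hm
    have hk2' : 4 * k ≤ 3 * m := by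
      have : ((4 * k : ℕ) : ℝ) ≤ ((3 * m : ℕ) : ℝ) := by
        push_cast; push_cast at hk2; linarith
      exact_mod_cast this
    have hk1' : m ≤ 2 * k := by
      have : ((m : ℕ) : ℝ) ≤ ((2 * k : ℕ) : ℝ) := by
        push_cast; push_cast at hk1; linarith
      exact_mod_cast this
    set n : ℕ := m - k with hn
    have hnN₀ : N₀ ≤ n := by omega
    have hit : (⇑T)^[m] x = (⇑T)^[n] ((⇑T)^[k] x) := by
      rw [← Function.iterate_add_apply]
      have : n + k = m := by omega
      rw [this]
    rw [hit]
    have hb := hkA n hnN₀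
    have h2n : 2 * n ≤ m := by omega
    have h2n' : 2 * (n : ℝ) ≤ (m : ℝ) := by exact_mod_cast h2n
    have hq'2 : (q' : ℝ) / 2 < (q'' : ℝ) := by
      have : ((q' / 2 : ℚ) : ℝ) < ((q'' : ℚ) : ℝ) := by exact_mod_cast hq''
      push_cast at this
      linarith
    have hq'pos : (0 : ℝ) < (q' : ℝ) := by exact_mod_cast hq'0
    have hm0 : (0 : ℝ) ≤ (m : ℝ) := Nat.cast_nonneg m
    nlinarith
  -- Step 6: iterate the descent
  have hiter : ∀ (ε : ℚ), 0 < ε → ∀ t : ℕ, ∃ q : ℚ,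
      0 ≤ q ∧ μ (W q) = 1 ∧ q ≤ ε + (M : ℚ) / 2 ^ t := by
    intro ε hε t
    induction t with
    | zero =>
      refine ⟨(M : ℚ), by positivity, hM1, ?_⟩
      norm_num
      linarith
    | succ t ih =>
      obtain ⟨q, hq0, hq1, hqle⟩ := ih
      refine ⟨(q + ε) / 2, by positivity, ?_, ?_⟩
      · exact hdesc q (q + ε) hq0 hq1 (by linarith)
      · have heq : (M : ℚ) / 2 ^ (t + 1) = ((M : ℚ) / 2 ^ t) / 2 := by
          rw [pow_succ, ← div_div]
        rw [heq]
        linarith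
  have hsmall : ∀ ε : ℚ, 0 < ε → ∃ q : ℚ, 0 ≤ q ∧ μ (W q) = 1 ∧ q ≤ 2 * ε := by
    intro ε hε
    obtain ⟨t, ht⟩ := pow_unbounded_of_one_lt ((M : ℚ) / ε) (by norm_num : (1:ℚ) < 2)
    obtain ⟨q, h0, h1, hle⟩ := hiter ε hε t
    refine ⟨q, h0, h1, ?_⟩
    have h2 : (0:ℚ) < 2 ^ t := by positivity
    have hMε : (M : ℚ) / 2 ^ t ≤ ε := by
      rw [div_le_iff₀ h2]
      have h3 := (div_lt_iff₀ hε).mp ht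
      nlinarith
    linarith
  -- Step 7: conclusion
  have hQ : ∀ j : ℕ, ∃ q : ℚ, 0 ≤ q ∧ μ (W q) = 1 ∧ q ≤ 2 * (1 / ((j : ℚ) + 1)) :=
    fun j => hsmall (1 / ((j : ℚ) + 1)) (by positivity)
  choose Q hQ0 hQ1 hQle using hQ
  have hae : ∀ᵐ x ∂μ, ∀ j : ℕ, x ∈ W (Q j) := by
    rw [ae_all_iff]
    intro j
    exact hone_ae (Q j) (hQ1 j)
  filter_upwards [hae] with x hx
  rw [Metric.tendsto_atTop]
  intro ε hε
  obtain ⟨j, hj⟩ := exists_nat_gt (3 / ε)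
  have hjpos : (0 : ℝ) < (j : ℝ) + 1 := by positivity
  have hεj : (3 : ℝ) / ((j : ℝ) + 1) < ε := by
    rw [div_lt_iff₀ hjpos]
    have h3ε : 3 / ε < (j : ℝ) := hj
    rw [div_lt_iff₀ hε] at h3ε
    nlinarith
  have hlt : Q j < Q j + 1 / ((j : ℚ) + 1) := by
    have : (0:ℚ) < 1 / ((j : ℚ) + 1) := by positivity
    linarith
  obtain ⟨N', hN'⟩ := hx j (Q j + 1 / ((j : ℚ) + 1)) hlt
  refine ⟨max N' 1, fun n hn => ?_⟩
  have hn1 : 1 ≤ n := le_trans (le_max_right _ _) hn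
  have hnR : (0 : ℝ) < (n : ℝ) := by exact_mod_cast hn1
  have hb := hN' n (le_trans (le_max_left _ _) hn)
  have hit : (T ^ n) x = (⇑T)^[n] x := congrFun (Equiv.Perm.coe_pow T n) x
  rw [Real.dist_eq, sub_zero, hit, abs_div, abs_of_pos hnR, div_lt_iff₀ hnR]
  have hq'le : ((Q j + 1 / ((j : ℚ) + 1) : ℚ) : ℝ) ≤ 3 / ((j : ℝ) + 1) := by
    have h1 : (Q j : ℝ) ≤ ((2 * (1 / ((j : ℚ) + 1)) : ℚ) : ℝ) := by
      exact_mod_cast hQle j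
    push_cast at h1 ⊢
    have e : 3/((j:ℝ)+1) = 2*(1/((j:ℝ)+1)) + 1/((j:ℝ)+1) := by ring
    linarith
  nlinarith
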